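/- Let b₁, b₂, b₃ ∈ ℝ and α ∈ ℝ, and define b_α : ℝ² → ℝ by b_α(φ,ψ) = (b₁((1−φ)/2)²(2+φ) + b₂((1+φ)/2)²(2−φ))((1+ψ)/2)²(2−ψ) + b₃((1−ψ)/2)²(2+ψ) + (α/16)|b₂−b₁|(1−φ²)²((1+ψ)/2)²(2−ψ) + (α/16)(|b₃−b₁|((1−φ)/2)²(2+φ) + |b₃−b₂|((1+φ)/2)²(2−φ))(1−ψ²)² + (α²/256)||b₃−b₁| − |b₃−b₂||(1−φ²)²(1−ψ²)². Then: (i) b_α(−1, 1) = b₁ and b_α(1, 1) = b₂; (ii) b_α(φ, −1) = b₃ for every φ ∈ ℝ; (iii) both partial derivatives ∂_φ b_α and ∂_ψ b_α vanish at (−1, 1) and at (1, 1), and ∂_ψ b_α(φ, −1) = 0 as well as ∂_φ b_α(φ, −1) = 0 for every φ ∈ ℝ. -/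

import Mathlib

lemma three_phase_hasDerivAt (A B C x : ℝ) :
    HasDerivAt (fun x : ℝ => A * (((1 - x) / 2) ^ 2 * (2 + x)) +
        B * (((1 + x) / 2) ^ 2 * (2 - x)) + C * (1 - x ^ 2) ^ 2)
      (A * (3 / 4 * (x ^ 2 - 1)) + B * (3 / 4 * (1 - x ^ 2)) +
        C * (-4 * x * (1 - x ^ 2))) x := by
  have h1 : HasDerivAt (fun x : ℝ => (1 - x) / 2) (-1 / 2) x := by
    simpa using ((hasDerivAt_id x).const_sub 1).div_const 2
  have h2 : HasDerivAt (fun x : ℝ => (1 + x) / 2) (1 / 2) x := by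
    simpa using ((hasDerivAt_id x).const_add 1).div_const 2
  have h3 : HasDerivAt (fun x : ℝ => 2 + x) 1 x := by
    simpa using (hasDerivAt_id x).const_add 2
  have h4 : HasDerivAt (fun x : ℝ => 2 - x) (-1) x := by
    simpa using (hasDerivAt_id x).const_sub 2
  have h5 : HasDerivAt (fun x : ℝ => 1 - x ^ 2) (-(2 * x)) x := by
    simpa using ((hasDerivAt_pow 2 x).const_sub 1)
  have hA := (((h1.pow 2).mul h3).const_mul A)
  have hB := (((h2.pow 2).mul h4).const_mul B)
  have hC := ((h5.pow 2).const_mul C)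
  convert (hA.add hB).add hC using 1
  · rfl
  · rfl
  · funext y; simp only [Pi.add_apply, Pi.mul_apply, Pi.pow_apply]
  · simp only [Pi.pow_apply]; push_cast; ring

/-- The proposed consistent interpolation `b_α(φ,ψ)` of a
physical parameter with pure values `b₁` at `(φ,ψ) = (−1,1)`, `b₂` at `(1,1)`
and `b₃` on `ψ = −1` attains those pure values and has vanishing partial
derivatives there. -/
theorem three_phase_interpolation_consistency (b₁ b₂ b₃ α : ℝ)
    (b : ℝ → ℝ → ℝ)
    (hb : ∀ φ ψ : ℝ, b φ ψ =
      (b₁ * ((1 - φ) / 2) ^ 2 * (2 + φ) + b₂ * ((1 + φ) / 2) ^ 2 * (2 - φ)) *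
          (((1 + ψ) / 2) ^ 2 * (2 - ψ)) +
        b₃ * ((1 - ψ) / 2) ^ 2 * (2 + ψ) +
        α / 16 * |b₂ - b₁| * (1 - φ ^ 2) ^ 2 * (((1 + ψ) / 2) ^ 2 * (2 - ψ)) +
        α / 16 * (|b₃ - b₁| * ((1 - φ) / 2) ^ 2 * (2 + φ) +
            |b₃ - b₂| * ((1 + φ) / 2) ^ 2 * (2 - φ)) * (1 - ψ ^ 2) ^ 2 +
        α ^ 2 / 16 ^ 2 * |(|b₃ - b₁| - |b₃ - b₂|)| * (1 - φ ^ 2) ^ 2 *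
          (1 - ψ ^ 2) ^ 2) :
    (b (-1) 1 = b₁ ∧ b 1 1 = b₂) ∧
      (∀ φ : ℝ, b φ (-1) = b₃) ∧
      ((deriv (fun φ => b φ 1) (-1) = 0 ∧ deriv (fun ψ => b (-1) ψ) 1 = 0) ∧
        (deriv (fun φ => b φ 1) 1 = 0 ∧ deriv (fun ψ => b 1 ψ) 1 = 0) ∧
        (∀ φ : ℝ, deriv (fun ψ => b φ ψ) (-1) = 0) ∧
        (∀ φ : ℝ, deriv (fun φ' => b φ' (-1)) φ = 0)) := by
  have hφ1 : (fun φ => b φ 1) = (fun x : ℝ =>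
      b₁ * (((1 - x) / 2) ^ 2 * (2 + x)) + b₂ * (((1 + x) / 2) ^ 2 * (2 - x)) +
        (α / 16 * |b₂ - b₁|) * (1 - x ^ 2) ^ 2) := by
    funext x; rw [hb]; ring
  have hψ : ∀ φ : ℝ, (fun ψ => b φ ψ) = (fun x : ℝ =>
      b₃ * (((1 - x) / 2) ^ 2 * (2 + x)) +
        (b₁ * ((1 - φ) / 2) ^ 2 * (2 + φ) + b₂ * ((1 + φ) / 2) ^ 2 * (2 - φ) +
          α / 16 * |b₂ - b₁| * (1 - φ ^ 2) ^ 2) * (((1 + x) / 2) ^ 2 * (2 - x)) +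
        (α / 16 * (|b₃ - b₁| * ((1 - φ) / 2) ^ 2 * (2 + φ) +
            |b₃ - b₂| * ((1 + φ) / 2) ^ 2 * (2 - φ)) +
          α ^ 2 / 16 ^ 2 * |(|b₃ - b₁| - |b₃ - b₂|)| * (1 - φ ^ 2) ^ 2) *
          (1 - x ^ 2) ^ 2) := by
    intro φ; funext x; rw [hb]; ring
  have hconst : ∀ φ : ℝ, b φ (-1) = b₃ := by
    intro φ; rw [hb]; ring_nf
  refine ⟨⟨by rw [hb]; norm_num, by rw [hb]; norm_num⟩, hconst, ⟨?_, ?_⟩, ⟨?_, ?_⟩, ?_, ?_⟩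
  · rw [hφ1, (three_phase_hasDerivAt _ _ _ (-1)).deriv]; norm_num
  · rw [hψ (-1), (three_phase_hasDerivAt _ _ _ 1).deriv]; norm_num
  · rw [hφ1, (three_phase_hasDerivAt _ _ _ 1).deriv]; norm_num
  · rw [hψ 1, (three_phase_hasDerivAt _ _ _ 1).deriv]; norm_num
  · intro φ
    rw [hψ φ, (three_phase_hasDerivAt _ _ _ (-1)).deriv]; norm_num
  · intro φ
    have : (fun φ' => b φ' (-1)) = fun _ => b₃ := funext fun x => hconst x
    rw [this, deriv_const]
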